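/- If a Markov kernel p on (X, 𝒳) admits a point x* and constants n ∈ ℕ, ε > 0 with p^{(n)}(x, {x*}) ≥ ε for all x ∈ X, and p has an invariant probability measure μ*, then μ* is the unique invariant probability measure and μ*({x*}) ≥ ε. -/

import Mathlib

open MeasureTheory ProbabilityTheory

/-- The `n`-step transition kernel: `stepN p 0 = id`, `stepN p (n+1) (x, E) = ∫ p(x,dy) stepN p n (y, E)`. -/
noncomputable def stepN {X : Type*} [MeasurableSpace X] (p : Kernel X X) : ℕ → Kernel X X
  | 0 => Kernel.id
  | n + 1 => (stepN p n).comp p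

section Aux

open Filter Topology

variable {X : Type*} [MeasurableSpace X]

instance stepN_isMarkov (p : Kernel X X) [IsMarkovKernel p] (n : ℕ) :
    IsMarkovKernel (stepN p n) := by
  induction n with
  | zero => rw [stepN]; infer_instance
  | succ n ih => rw [stepN]; exact Kernel.IsMarkovKernel.comp _ _

lemma stepN_succ_apply (p : Kernel X X) (n : ℕ) (x : X) {E : Set X} (hE : MeasurableSet E) :
    stepN p (n + 1) x E = ∫⁻ y, stepN p n y E ∂(p x) := by
  rw [stepN, Kernel.comp_apply' _ _ _ hE]

/-- Invariance propagates to the `n`-step kernel. -/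
lemma invariant_stepN (p : Kernel X X) [IsMarkovKernel p] {μ : Measure X}
    (hinv : ∀ E : Set X, MeasurableSet E → μ E = ∫⁻ x, p x E ∂μ) (n : ℕ) :
    ∀ E : Set X, MeasurableSet E → μ E = ∫⁻ x, stepN p n x E ∂μ := by
  have hbind : μ.bind p = μ := by
    ext E hE
    rw [Measure.bind_apply hE (Kernel.measurable _).aemeasurable]
    exact (hinv E hE).symm
  induction n with
  | zero =>
    intro E hE
    simp only [stepN, Kernel.id_apply, Measure.dirac_apply' _ hE]
    rw [lintegral_indicator_one hE]
  | succ n ih =>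
    intro E hE
    have hmeas : Measurable fun y => stepN p n y E := Kernel.measurable_coe _ hE
    calc μ E = ∫⁻ y, stepN p n y E ∂μ := ih E hE
      _ = ∫⁻ y, stepN p n y E ∂(μ.bind p) := by rw [hbind]
      _ = ∫⁻ x, ∫⁻ y, stepN p n y E ∂(p x) ∂μ := MeasureTheory.Measure.lintegral_bind (Kernel.measurable _).aemeasurable hmeas.aemeasurable
      _ = ∫⁻ x, stepN p (n + 1) x E ∂μ := by
          simp_rw [stepN_succ_apply p n _ hE]

/-- The Doeblin contraction: the oscillation of `stepN q k · E` is at most `(1-ε)^k`. -/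
lemma doeblin_contraction [MeasurableSingletonClass X]
    (q : Kernel X X) [IsMarkovKernel q] (xstar : X) (ε : ENNReal)
    (hmin : ∀ x : X, ε ≤ q x {xstar}) (k : ℕ) :
    ∀ x y : X, ∀ E : Set X, MeasurableSet E →
      stepN q k x E ≤ stepN q k y E + (1 - ε) ^ k := by
  have : Nonempty X := ⟨xstar⟩
  have hε1 : ε ≤ 1 := (hmin xstar).trans prob_le_one
  induction k with
  | zero =>
    intro x y E hE
    simp only [pow_zero]
    exact le_add_left prob_le_one
  | succ k ih =>
    intro x y E hE
    set f : X → ENNReal := fun z => stepN q k z E with hf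
    have hfm : Measurable f := Kernel.measurable_coe _ hE
    have hf1 : ∀ z, f z ≤ 1 := fun z => prob_le_one
    set t : ENNReal := f xstar with ht
    set S : ENNReal := ⨆ z, f z with hS
    set I : ENNReal := ⨅ z, f z with hI
    have htS : t ≤ S := le_iSup f xstar
    have hIt : I ≤ t := iInf_le f xstar
    have hSI : S ≤ I + (1 - ε) ^ k := by
      refine iSup_le fun z => ?_
      rw [ENNReal.iInf_add]
      exact le_iInf fun w => ih z w E hE
    have hone : ∀ z : X, q z {xstar} + q z {xstar}ᶜ = 1 := fun z => by
      rw [measure_add_measure_compl (measurableSet_singleton xstar), measure_univ]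
    -- key arithmetic fact: a + c = 1, ε ≤ a implies (a - ε) + c = 1 - ε
    have hkey : ∀ z : X, (q z {xstar} - ε) + q z {xstar}ᶜ = 1 - ε := by
      intro z
      have h1 : ε + ((q z {xstar} - ε) + q z {xstar}ᶜ) = 1 := by
        rw [← add_assoc, add_comm ε, tsub_add_cancel_of_le (hmin z), hone z]
      refine ENNReal.eq_sub_of_add_eq (hε1.trans_lt ENNReal.one_lt_top).ne ?_
      rw [add_comm]; exact h1
    have hsplit : ∀ z : X, stepN q (k + 1) z E
        = ∫⁻ w in {xstar}, f w ∂(q z) + ∫⁻ w in {xstar}ᶜ, f w ∂(q z) := by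
      intro z
      rw [stepN_succ_apply q k z hE, lintegral_add_compl f (measurableSet_singleton xstar)]
    have hsing : ∀ z : X, ∫⁻ w in {xstar}, f w ∂(q z) = t * q z {xstar} := fun z =>
      lintegral_singleton f xstar
    -- upper bound at x
    have hup : stepN q (k + 1) x E ≤ t * ε + S * (1 - ε) := by
      rw [hsplit x, hsing x]
      have h2 : ∫⁻ w in {xstar}ᶜ, f w ∂(q x) ≤ S * q x {xstar}ᶜ := by
        calc ∫⁻ w in {xstar}ᶜ, f w ∂(q x) ≤ ∫⁻ _ in {xstar}ᶜ, S ∂(q x) :=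
              lintegral_mono fun w => le_iSup f w
          _ = S * q x {xstar}ᶜ := by
              rw [setLIntegral_const]
      calc t * q x {xstar} + ∫⁻ w in {xstar}ᶜ, f w ∂(q x)
          ≤ t * q x {xstar} + S * q x {xstar}ᶜ := by gcongr
        _ = t * (ε + (q x {xstar} - ε)) + S * q x {xstar}ᶜ := by
            rw [add_tsub_cancel_of_le (hmin x)]
        _ = t * ε + (t * (q x {xstar} - ε) + S * q x {xstar}ᶜ) := by ring
        _ ≤ t * ε + (S * (q x {xstar} - ε) + S * q x {xstar}ᶜ) := by gcongr
        _ = t * ε + S * ((q x {xstar} - ε) + q x {xstar}ᶜ) := by ring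
        _ = t * ε + S * (1 - ε) := by rw [hkey x]
    -- lower bound at y
    have hlo : t * ε + I * (1 - ε) ≤ stepN q (k + 1) y E := by
      rw [hsplit y, hsing y]
      have h2 : I * q y {xstar}ᶜ ≤ ∫⁻ w in {xstar}ᶜ, f w ∂(q y) := by
        calc I * q y {xstar}ᶜ = ∫⁻ _ in {xstar}ᶜ, I ∂(q y) := by rw [setLIntegral_const]
          _ ≤ ∫⁻ w in {xstar}ᶜ, f w ∂(q y) := lintegral_mono fun w => iInf_le f w
      calc t * ε + I * (1 - ε)
          = t * ε + I * ((q y {xstar} - ε) + q y {xstar}ᶜ) := by rw [hkey y]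
        _ = t * ε + (I * (q y {xstar} - ε) + I * q y {xstar}ᶜ) := by ring
        _ ≤ t * ε + (t * (q y {xstar} - ε) + I * q y {xstar}ᶜ) := by gcongr
        _ = t * (ε + (q y {xstar} - ε)) + I * q y {xstar}ᶜ := by ring
        _ = t * q y {xstar} + I * q y {xstar}ᶜ := by rw [add_tsub_cancel_of_le (hmin y)]
        _ ≤ t * q y {xstar} + ∫⁻ w in {xstar}ᶜ, f w ∂(q y) := by gcongr
    calc stepN q (k + 1) x E ≤ t * ε + S * (1 - ε) := hup
      _ ≤ t * ε + (I + (1 - ε) ^ k) * (1 - ε) := by gcongr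
      _ = (t * ε + I * (1 - ε)) + (1 - ε) ^ (k + 1) := by ring
      _ ≤ stepN q (k + 1) y E + (1 - ε) ^ (k + 1) := by gcongr

end Aux

/-- If `p^{(n)}(x, {x*}) ≥ ε > 0` for all `x`, and `μ*` is an invariant probability measure,
then `μ*` is the unique invariant probability measure and `μ*({x*}) ≥ ε`. -/
theorem unique_invariant_measure_of_minorization
    {X : Type*} [MeasurableSpace X] [MeasurableSingletonClass X]
    (p : Kernel X X) [IsMarkovKernel p]
    (xstar : X) (n : ℕ) (ε : ENNReal) (hε : 0 < ε)
    (hmin : ∀ x : X, ε ≤ stepN p n x {xstar})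
    (μstar : Measure X) [IsProbabilityMeasure μstar]
    (hinv : ∀ E : Set X, MeasurableSet E → μstar E = ∫⁻ x, p x E ∂μstar) :
    (∀ ν : Measure X, IsProbabilityMeasure ν →
      (∀ E : Set X, MeasurableSet E → ν E = ∫⁻ x, p x E ∂ν) → ν = μstar) ∧
    ε ≤ μstar {xstar} := by
  set q : Kernel X X := stepN p n with hq
  have hε1 : ε ≤ 1 := (hmin xstar).trans prob_le_one
  have hεtop : ε ≠ ⊤ := (hε1.trans_lt (by simp)).ne
  -- the contraction factor tends to 0
  have hlt : (1 : ENNReal) - ε < 1 :=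
    ENNReal.sub_lt_self (by simp) one_ne_zero hε.ne'
  have htend : Filter.Tendsto (fun k => (1 - ε) ^ k) Filter.atTop (nhds 0) :=
    ENNReal.tendsto_pow_atTop_nhds_zero_of_lt_one hlt
  -- generic comparison: any two invariant probability measures agree
  have hcomp : ∀ (σ τ : Measure X), IsProbabilityMeasure σ → IsProbabilityMeasure τ →
      (∀ E : Set X, MeasurableSet E → σ E = ∫⁻ x, p x E ∂σ) →
      (∀ E : Set X, MeasurableSet E → τ E = ∫⁻ x, p x E ∂τ) →
      ∀ E : Set X, MeasurableSet E → σ E ≤ τ E := by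
    intro σ τ hσp hτp hσ hτ E hE
    have hσq : ∀ E : Set X, MeasurableSet E → σ E = ∫⁻ x, q x E ∂σ :=
      invariant_stepN p hσ n
    have hτq : ∀ E : Set X, MeasurableSet E → τ E = ∫⁻ x, q x E ∂τ :=
      invariant_stepN p hτ n
    have hσQ : ∀ k, σ E = ∫⁻ x, stepN q k x E ∂σ := fun k => invariant_stepN q hσq k E hE
    have hτQ : ∀ k, τ E = ∫⁻ x, stepN q k x E ∂τ := fun k => invariant_stepN q hτq k E hE
    have hosc := doeblin_contraction q xstar ε hmin
    have hbound : ∀ k : ℕ, σ E ≤ τ E + ((1 - ε) ^ k + (1 - ε) ^ k) := by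
      intro k
      have h1 : σ E ≤ stepN q k xstar E + (1 - ε) ^ k := by
        rw [hσQ k]
        calc ∫⁻ x, stepN q k x E ∂σ ≤ ∫⁻ _, stepN q k xstar E + (1 - ε) ^ k ∂σ :=
              lintegral_mono fun x => hosc k x xstar E hE
          _ = stepN q k xstar E + (1 - ε) ^ k := by
              rw [lintegral_const, measure_univ, mul_one]
      have h2 : stepN q k xstar E ≤ τ E + (1 - ε) ^ k := by
        rw [hτQ k]
        calc stepN q k xstar E = ∫⁻ _, stepN q k xstar E ∂τ := by
              rw [lintegral_const, measure_univ, mul_one]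
          _ ≤ ∫⁻ x, stepN q k x E + (1 - ε) ^ k ∂τ :=
              lintegral_mono fun x => hosc k xstar x E hE
          _ = ∫⁻ x, stepN q k x E ∂τ + (1 - ε) ^ k := by
              rw [lintegral_add_right _ measurable_const, lintegral_const, measure_univ, mul_one]
      calc σ E ≤ stepN q k xstar E + (1 - ε) ^ k := h1
        _ ≤ (τ E + (1 - ε) ^ k) + (1 - ε) ^ k := by gcongr
        _ = τ E + ((1 - ε) ^ k + (1 - ε) ^ k) := by ring
    have htend2 : Filter.Tendsto (fun k => τ E + ((1 - ε) ^ k + (1 - ε) ^ k))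
        Filter.atTop (nhds (τ E)) := by
      have : Filter.Tendsto (fun k => τ E + ((1 - ε) ^ k + (1 - ε) ^ k))
          Filter.atTop (nhds (τ E + (0 + 0))) :=
        Filter.Tendsto.add tendsto_const_nhds (Filter.Tendsto.add htend htend)
      simpa using this
    exact ge_of_tendsto' htend2 hbound
  constructor
  · intro ν hν hνinv
    ext E hE
    exact le_antisymm (hcomp ν μstar hν inferInstance hνinv hinv E hE)
      (hcomp μstar ν inferInstance hν hinv hνinv E hE)
  · have := invariant_stepN p hinv n {xstar} (measurableSet_singleton xstar)
    rw [this]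
    calc ε = ∫⁻ _, ε ∂μstar := by rw [lintegral_const, measure_univ, mul_one]
      _ ≤ ∫⁻ x, q x {xstar} ∂μstar := lintegral_mono hmin
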